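/- Let x̄ ∈ X ∩ F_b with Φ(x̄) ∈ ℝ. Then x̄ is an optimal solution of (P) if and only if ∫_T φ'(x̄(t))·u(t) dμ(t) ≥ 0 for every u ∈ K_{x̄} := [ℝ₊·(dom Φ - x̄)] ∩ X̃⁰, where X̃⁰ = {u ∈ X̃ : ∫ u ψ_k dμ = 0 ∀k}. -/

import Mathlib

open MeasureTheory ENNReal Filter Set Topology

/-- Positive part of an extended real, in `ℝ≥0∞`. -/
noncomputable def epos (a : EReal) : ℝ≥0∞ := if a = ⊤ then ⊤ else ENNReal.ofReal a.toReal

/-- Extended integral `∫ f dμ := ∫ f₊ dμ - ∫ f₋ dμ` with the convention `∞ - ∞ := ∞`. -/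
noncomputable def eintegral {T : Type*} [MeasurableSpace T] (μ : Measure T) (f : T → EReal) :
    EReal :=
  if (∫⁻ t, epos (f t) ∂μ) = ⊤ then ⊤
  else ((∫⁻ t, epos (f t) ∂μ : ℝ≥0∞) : EReal) - ((∫⁻ t, epos (- f t) ∂μ : ℝ≥0∞) : EReal)


/-- The integral functional Phi(x) := extended integral of phi(x(.)) with respect to mu. -/
noncomputable def Phi {T : Type*} [MeasurableSpace T] (μ : Measure T) (φ : ℝ → EReal)
    (x : T → ℝ) : EReal := eintegral μ (fun t => φ (x t))

/-- The feasible set of the entropy minimization problem: measurable `x` with `x·ψ_k ∈ L¹` and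
`∫ x ψ_k dμ = b_k` for each `k`. -/
def Feas {T : Type*} [MeasurableSpace T] (μ : Measure T) {m : ℕ} (ψ : Fin m → T → ℝ)
    (b : Fin m → ℝ) : Set (T → ℝ) :=
  {x : T → ℝ | Measurable x ∧ (∀ k, Integrable (fun t => x t * ψ k t) μ) ∧
    ∀ k, (∫ t, x t * ψ k t ∂μ) = b k}



section helpers
variable {T : Type*} [MeasurableSpace T] {μ : Measure T}

lemma epos_top : epos ⊤ = ⊤ := by simp [epos]
lemma epos_bot : epos ⊥ = 0 := by simp [epos]
lemma coe_ennreal_toReal' {A : ℝ≥0∞} (hA : A ≠ ⊤) : ((A : EReal)) = ((A.toReal : ℝ) : EReal) := by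
  rw [← EReal.toReal_coe_ennreal]
  exact (EReal.coe_toReal (by simpa [EReal.coe_ennreal_eq_top_iff]) (EReal.coe_ennreal_ne_bot _)).symm

lemma epos_coe (x : ℝ) : epos (x : EReal) = ENNReal.ofReal x := by
  simp [epos]

lemma epos_eq_top_iff {a : EReal} : epos a = ⊤ ↔ a = ⊤ := by
  unfold epos; split <;> simp_all

lemma epos_mono : Monotone epos := by
  intro a b h
  induction b using EReal.rec with
  | top => simp [epos_top]
  | bot => rw [le_bot_iff.1 h]
  | coe y =>
    induction a using EReal.rec with
    | bot => simp [epos_bot]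
    | top => exact absurd h (by simp)
    | coe x =>
      rw [epos_coe, epos_coe]
      exact ENNReal.ofReal_le_ofReal (EReal.coe_le_coe_iff.1 h)

lemma epos_eq_zero_of_nonpos {a : EReal} (h : a ≤ 0) : epos a = 0 := by
  have h2 : epos a ≤ epos ((0:ℝ):EReal) := epos_mono (by exact_mod_cast h)
  rw [epos_coe] at h2
  simpa using h2

lemma measurable_epos : Measurable epos := by
  unfold epos
  exact Measurable.ite (measurableSet_singleton _) measurable_const
    (ENNReal.measurable_ofReal.comp measurable_ereal_toReal)

lemma epos_coe_eq {a : EReal} (ha : a ≠ ⊤) : epos a = ENNReal.ofReal a.toReal := by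
  simp [epos, ha]

lemma eintegral_congr_ae {f g : T → EReal} (h : f =ᵐ[μ] g) : eintegral μ f = eintegral μ g := by
  unfold eintegral
  rw [lintegral_congr_ae (h.mono fun t ht => by rw [ht]),
    lintegral_congr_ae ((h.mono fun t ht => by simp only [ht]) :
      (fun t => epos (-f t)) =ᵐ[μ] fun t => epos (-g t))]

lemma ereal_sub_top (x : EReal) : x - ⊤ = ⊥ := by
  rw [sub_eq_add_neg, EReal.neg_top, EReal.add_bot]

lemma eintegral_mono_ae {f g : T → EReal} (h : ∀ᵐ t ∂μ, f t ≤ g t) :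
    eintegral μ f ≤ eintegral μ g := by
  have hpos : ∫⁻ t, epos (f t) ∂μ ≤ ∫⁻ t, epos (g t) ∂μ :=
    lintegral_mono_ae (h.mono fun t ht => epos_mono ht)
  have hneg : ∫⁻ t, epos (-g t) ∂μ ≤ ∫⁻ t, epos (-f t) ∂μ :=
    lintegral_mono_ae (h.mono fun t ht => epos_mono (EReal.neg_le_neg_iff.2 ht))
  unfold eintegral
  split_ifs with h1 h2 h2
  · exact le_refl _
  · exact absurd (top_le_iff.1 (h1 ▸ hpos)) h2
  · exact le_top
  · exact EReal.sub_le_sub (EReal.coe_ennreal_le_coe_ennreal_iff.2 hpos)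
      (EReal.coe_ennreal_le_coe_ennreal_iff.2 hneg)

lemma eintegral_nonneg_iff {f : T → EReal} :
    0 ≤ eintegral μ f ↔ ∫⁻ t, epos (-f t) ∂μ ≤ ∫⁻ t, epos (f t) ∂μ := by
  unfold eintegral
  split_ifs with h1
  · simp [h1, le_top]
  · constructor
    · intro h
      by_contra hc
      push_neg at hc
      rcases eq_or_ne (∫⁻ t, epos (-f t) ∂μ) ⊤ with hB | hB
      · rw [hB, EReal.coe_ennreal_top, ereal_sub_top] at h
        exact absurd h (by simp)
      · rw [show ((∫⁻ t, epos (f t) ∂μ : ℝ≥0∞) : EReal)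
            = ((∫⁻ t, epos (f t) ∂μ).toReal : ℝ) from coe_ennreal_toReal' h1,
          show ((∫⁻ t, epos (-f t) ∂μ : ℝ≥0∞) : EReal)
            = ((∫⁻ t, epos (-f t) ∂μ).toReal : ℝ) from coe_ennreal_toReal' hB,
          ← EReal.coe_sub] at h
        have := EReal.coe_le_coe_iff.1 (by exact_mod_cast h)
        have h2 := ENNReal.toReal_lt_toReal h1 hB |>.2 hc
        linarith [this, sub_nonneg.1 (by linarith : (0:ℝ) ≤ _)]
    · intro h
      rcases eq_or_ne (∫⁻ t, epos (-f t) ∂μ) ⊤ with hB | hB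
      · exact absurd (top_le_iff.1 (hB ▸ h)) h1
      · rw [show ((∫⁻ t, epos (f t) ∂μ : ℝ≥0∞) : EReal)
            = ((∫⁻ t, epos (f t) ∂μ).toReal : ℝ) from coe_ennreal_toReal' h1,
          show ((∫⁻ t, epos (-f t) ∂μ : ℝ≥0∞) : EReal)
            = ((∫⁻ t, epos (-f t) ∂μ).toReal : ℝ) from coe_ennreal_toReal' hB,
          ← EReal.coe_sub]
        have := ENNReal.toReal_le_toReal hB h1 |>.2 h
        exact_mod_cast sub_nonneg.2 this

end helpers

section helpers2
variable {T : Type*} [MeasurableSpace T] {μ : Measure T}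


-- scaling
lemma epos_coe_mul {c : ℝ} (hc : 0 < c) (a : EReal) :
    epos ((c : EReal) * a) = ENNReal.ofReal c * epos a := by
  induction a using EReal.rec with
  | top =>
    rw [EReal.coe_mul_top_of_pos hc, epos_top, ENNReal.mul_top (by simp [hc])]
  | bot => rw [EReal.coe_mul_bot_of_pos hc, epos_bot, mul_zero]
  | coe x => rw [← EReal.coe_mul, epos_coe, epos_coe, ENNReal.ofReal_mul hc.le]

lemma ereal_neg_coe_mul (c : ℝ) (a : EReal) : -((c : EReal) * a) = (c : EReal) * (-a) := by
  rw [mul_neg]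

lemma eintegral_coe_mul_nonneg_iff {c : ℝ} (hc : 0 < c) (f : T → EReal) :
    (0 ≤ eintegral μ (fun t => (c : EReal) * f t)) ↔ 0 ≤ eintegral μ f := by
  rw [eintegral_nonneg_iff, eintegral_nonneg_iff]
  simp only [ereal_neg_coe_mul, epos_coe_mul hc]
  rw [lintegral_const_mul' _ _ ENNReal.ofReal_ne_top,
    lintegral_const_mul' _ _ ENNReal.ofReal_ne_top]
  exact ENNReal.mul_le_mul_iff_right (by simp [hc]) ENNReal.ofReal_ne_top

-- pointwise inequalities
lemma epos_add_le (x : ℝ) (a : EReal) : epos ((x : EReal) + a) ≤ epos (x:EReal) + epos a := by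
  induction a using EReal.rec with
  | top => simp [epos_top]
  | bot => simp [EReal.add_bot, epos_bot]
  | coe y =>
    rw [← EReal.coe_add, epos_coe, epos_coe, epos_coe]
    exact ENNReal.ofReal_add_le

lemma ofReal_tri (x y : ℝ) :
    ENNReal.ofReal (x + y) + ENNReal.ofReal (-x) + ENNReal.ofReal (-y)
      = ENNReal.ofReal (-(x + y)) + ENNReal.ofReal x + ENNReal.ofReal y := by
  have key : ∀ z : ℝ, ENNReal.ofReal z = ENNReal.ofReal (max z 0) := by
    intro z
    rcases le_total z 0 with h | h
    · simp [ENNReal.ofReal_eq_zero.2 h, max_eq_right h]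
    · rw [max_eq_left h]
  rw [key (x+y), key (-x), key (-y), key (-(x+y)), key x, key y,
    ← ENNReal.ofReal_add (le_max_right _ _) (le_max_right _ _),
    ← ENNReal.ofReal_add (add_nonneg (le_max_right _ _) (le_max_right _ _)) (le_max_right _ _),
    ← ENNReal.ofReal_add (le_max_right _ _) (le_max_right _ _),
    ← ENNReal.ofReal_add (add_nonneg (le_max_right _ _) (le_max_right _ _)) (le_max_right _ _)]
  congr 1
  simp only [max_def]
  split_ifs <;> linarith

lemma epos_tri (x : ℝ) (a : EReal) :
    epos ((x : EReal) + a) + epos (-(x:EReal)) + epos (-a)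
      = epos (-((x : EReal) + a)) + epos (x:EReal) + epos a := by
  induction a using EReal.rec with
  | top =>
    rw [EReal.add_top_of_ne_bot (EReal.coe_ne_bot x), epos_top]
    simp [epos_top]
  | bot =>
    rw [EReal.add_bot, EReal.neg_bot, epos_top]
    simp [epos_top, epos_bot]
  | coe y =>
    rw [← EReal.coe_add, ← EReal.coe_neg, ← EReal.coe_neg, ← EReal.coe_neg,
      epos_coe, epos_coe, epos_coe, epos_coe, epos_coe, epos_coe]
    exact ofReal_tri x y

end helpers2


section add
variable {T : Type*} [MeasurableSpace T] {μ : Measure T}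

lemma coe_eq_neg_add (x : ℝ) (a : EReal) : a = ((-x : ℝ) : EReal) + ((x:EReal) + a) := by
  rw [← add_assoc, ← EReal.coe_add]
  norm_num

lemma neg_eq_coe_add_neg (x : ℝ) (a : EReal) : -a = (x : EReal) + (-((x:EReal) + a)) := by
  induction a using EReal.rec with
  | top => rw [EReal.add_top_of_ne_bot (EReal.coe_ne_bot x), EReal.neg_top, EReal.add_bot]
  | bot => rw [EReal.add_bot, EReal.neg_bot, EReal.add_top_of_ne_bot (EReal.coe_ne_bot x)]
  | coe y =>
    rw [← EReal.coe_add, ← EReal.coe_neg, ← EReal.coe_neg, ← EReal.coe_add]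
    norm_num

lemma neg_coe_add (x : ℝ) (a : EReal) : -((x:EReal) + a) = ((-x : ℝ) : EReal) + (-a) := by
  induction a using EReal.rec with
  | top => rw [EReal.add_top_of_ne_bot (EReal.coe_ne_bot x), EReal.neg_top, EReal.add_bot]
  | bot => simp [EReal.add_bot, EReal.neg_bot, EReal.add_top_of_ne_bot (EReal.coe_ne_bot (-x))]
  | coe y =>
    have : -((x:EReal) + (y:EReal)) = ((-(x+y) : ℝ) : EReal) := by
      rw [← EReal.coe_add, ← EReal.coe_neg]
    rw [this, ← EReal.coe_neg, ← EReal.coe_add]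
    norm_num
    exact add_comm _ _

lemma measurable_coe_add_ereal {p : T → ℝ} {q : T → EReal} (hp : Measurable p)
    (hq : Measurable q) : Measurable fun t => (p t : EReal) + q t := by
  have heq : (fun t => (p t : EReal) + q t) = fun t =>
      if q t = ⊤ then ⊤ else if q t = ⊥ then ⊥ else ((p t + (q t).toReal : ℝ) : EReal) := by
    funext t
    rcases eq_or_ne (q t) ⊤ with h | h
    · rw [if_pos h, h, EReal.add_top_of_ne_bot (EReal.coe_ne_bot _)]
    · rw [if_neg h]
      rcases eq_or_ne (q t) ⊥ with h2 | h2
      · rw [if_pos h2, h2, EReal.add_bot]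
      · rw [if_neg h2, EReal.coe_add, EReal.coe_toReal h h2]
  rw [heq]
  refine Measurable.ite (hq (measurableSet_singleton ⊤)) measurable_const ?_
  refine Measurable.ite (hq (measurableSet_singleton ⊥)) measurable_const ?_
  exact measurable_coe_real_ereal.comp (hp.add hq.ereal_toReal)

lemma eintegral_add_left_real {p : T → ℝ} {q : T → EReal}
    (hpm : Measurable p) (hqm : Measurable q)
    (hP : ∫⁻ t, epos ((p t : EReal)) ∂μ ≠ ⊤) (hN : ∫⁻ t, epos (-(p t : EReal)) ∂μ ≠ ⊤) :
    eintegral μ (fun t => (p t : EReal) + q t)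
      = eintegral μ (fun t => (p t : EReal)) + eintegral μ q := by
  have hqneg : Measurable fun t => -(q t) := continuous_neg.measurable.comp hqm
  have hmS : Measurable fun t => epos ((p t : EReal) + q t) :=
    measurable_epos.comp (measurable_coe_add_ereal hpm hqm)
  have hmSm : Measurable fun t => epos (-((p t : EReal) + q t)) :=
    measurable_epos.comp (continuous_neg.measurable.comp (measurable_coe_add_ereal hpm hqm))
  have hmP : Measurable fun t => epos ((p t : EReal)) :=
    measurable_epos.comp (measurable_coe_real_ereal.comp hpm)
  have hmN : Measurable fun t => epos (-(p t : EReal)) := by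
    have heq : (fun t => epos (-(p t : EReal))) = fun t => epos (((-p t : ℝ) : EReal)) := by
      funext t; rw [EReal.coe_neg]
    rw [heq]
    exact measurable_epos.comp (measurable_coe_real_ereal.comp hpm.neg)
  have hmA : Measurable fun t => epos (q t) := measurable_epos.comp hqm
  have hmB : Measurable fun t => epos (-(q t)) := measurable_epos.comp hqneg
  set P := ∫⁻ t, epos ((p t : EReal)) ∂μ with hPdef
  set N := ∫⁻ t, epos (-(p t : EReal)) ∂μ with hNdef
  set A := ∫⁻ t, epos (q t) ∂μ with hAdef
  set B := ∫⁻ t, epos (-(q t)) ∂μ with hBdef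
  set Sp := ∫⁻ t, epos ((p t : EReal) + q t) ∂μ with hSpdef
  set Sm := ∫⁻ t, epos (-((p t : EReal) + q t)) ∂μ with hSmdef
  -- pointwise inequalities integrated
  have hA_le : A ≤ Sp + N := by
    rw [← lintegral_add_left hmS]
    refine lintegral_mono fun t => ?_
    calc epos (q t) = epos (((-p t : ℝ) : EReal) + ((p t : EReal) + q t)) := by
          rw [← coe_eq_neg_add]
      _ ≤ epos ((-p t : ℝ) : EReal) + epos ((p t : EReal) + q t) := epos_add_le _ _
      _ = epos ((p t : EReal) + q t) + epos (-(p t : EReal)) := by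
          rw [EReal.coe_neg, add_comm]
  have hSp_le : Sp ≤ P + A := by
    rw [← lintegral_add_left hmP]
    exact lintegral_mono fun t => epos_add_le _ _
  have hB_le : B ≤ Sm + P := by
    rw [← lintegral_add_left hmSm]
    refine lintegral_mono fun t => ?_
    calc epos (-q t) = epos ((p t : EReal) + (-((p t : EReal) + q t))) := by
          rw [← neg_eq_coe_add_neg]
      _ ≤ epos ((p t : EReal)) + epos (-((p t : EReal) + q t)) := epos_add_le _ _
      _ = epos (-((p t : EReal) + q t)) + epos ((p t : EReal)) := add_comm _ _
  have hSm_le : Sm ≤ N + B := by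
    rw [← lintegral_add_left hmN]
    refine lintegral_mono fun t => ?_
    calc epos (-((p t : EReal) + q t)) = epos (((-p t : ℝ) : EReal) + (-q t)) := by
          rw [neg_coe_add]
      _ ≤ epos ((-p t : ℝ) : EReal) + epos (-q t) := epos_add_le _ _
      _ = epos (-(p t : EReal)) + epos (-q t) := by rw [EReal.coe_neg]
  have hid : Sp + N + B = Sm + P + A := by
    rw [hSpdef, hNdef, hBdef, hSmdef, hPdef, hAdef,
      ← lintegral_add_left hmS, ← lintegral_add_left (f := fun t => epos ((p t : EReal) + q t) + epos (-(p t : EReal))) (hmS.add hmN),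
      ← lintegral_add_left hmSm, ← lintegral_add_left (f := fun t => epos (-((p t : EReal) + q t)) + epos ((p t : EReal))) (hmSm.add hmP)]
    exact lintegral_congr fun t => epos_tri (p t) (q t)
  -- the real value of eintegral p
  have hpreal : eintegral μ (fun t => (p t : EReal)) = ((P.toReal - N.toReal : ℝ) : EReal) := by
    rw [eintegral, ← hPdef, ← hNdef, if_neg hP, coe_ennreal_toReal' hP, coe_ennreal_toReal' hN,
      ← EReal.coe_sub]
  rcases eq_or_ne A ⊤ with hA | hA
  · have hSp_top : Sp = ⊤ := by
      by_contra hc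
      exact (hA ▸ hA_le).trans_lt
        (ENNReal.add_lt_top.2 ⟨lt_top_iff_ne_top.2 hc, lt_top_iff_ne_top.2 hN⟩) |>.false
    have h1 : eintegral μ (fun t => (p t : EReal) + q t) = ⊤ := by
      rw [eintegral, ← hSpdef, if_pos hSp_top]
    have h2 : eintegral μ q = ⊤ := by rw [eintegral, ← hAdef, if_pos hA]
    rw [h1, h2, hpreal, EReal.add_top_of_ne_bot (EReal.coe_ne_bot _)]
  · have hSp : Sp ≠ ⊤ := fun hc =>
      (hc ▸ hSp_le).trans_lt
        (ENNReal.add_lt_top.2 ⟨lt_top_iff_ne_top.2 hP, lt_top_iff_ne_top.2 hA⟩) |>.false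
    rcases eq_or_ne B ⊤ with hB | hB
    · have hSm_top : Sm = ⊤ := by
        by_contra hc
        exact (hB ▸ hB_le).trans_lt
          (ENNReal.add_lt_top.2 ⟨lt_top_iff_ne_top.2 hc, lt_top_iff_ne_top.2 hP⟩) |>.false
      have h1 : eintegral μ (fun t => (p t : EReal) + q t) = ⊥ := by
        rw [eintegral, ← hSpdef, ← hSmdef, if_neg hSp, hSm_top, EReal.coe_ennreal_top,
          ereal_sub_top]
      have h2 : eintegral μ q = ⊥ := by
        rw [eintegral, ← hAdef, ← hBdef, if_neg hA, hB, EReal.coe_ennreal_top, ereal_sub_top]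
      rw [h1, h2, hpreal, EReal.add_bot]
    · have hSm : Sm ≠ ⊤ := fun hc =>
        (hc ▸ hSm_le).trans_lt
          (ENNReal.add_lt_top.2 ⟨lt_top_iff_ne_top.2 hN, lt_top_iff_ne_top.2 hB⟩) |>.false
      have hreal : Sp.toReal + N.toReal + B.toReal = Sm.toReal + P.toReal + A.toReal := by
        have := congrArg ENNReal.toReal hid
        rwa [ENNReal.toReal_add (ENNReal.add_ne_top.2 ⟨hSp, hN⟩) hB,
          ENNReal.toReal_add hSp hN,
          ENNReal.toReal_add (ENNReal.add_ne_top.2 ⟨hSm, hP⟩) hA,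
          ENNReal.toReal_add hSm hP] at this
      have h1 : eintegral μ (fun t => (p t : EReal) + q t)
          = ((Sp.toReal - Sm.toReal : ℝ) : EReal) := by
        rw [eintegral, ← hSpdef, ← hSmdef, if_neg hSp, coe_ennreal_toReal' hSp,
          coe_ennreal_toReal' hSm, ← EReal.coe_sub]
      have h2 : eintegral μ q = ((A.toReal - B.toReal : ℝ) : EReal) := by
        rw [eintegral, ← hAdef, ← hBdef, if_neg hA, coe_ennreal_toReal' hA,
          coe_ennreal_toReal' hB, ← EReal.coe_sub]
      rw [h1, h2, hpreal, ← EReal.coe_add]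
      norm_cast
      linarith
end add


lemma coe_mono_ereal : Monotone ((↑) : ℝ → EReal) := fun _ _ h => EReal.coe_le_coe_iff.2 h

lemma epos_iInf_coe (f : ℕ → ℝ) :
    epos (⨅ n, ((f n : ℝ) : EReal)) = ⨅ n, ENNReal.ofReal (f n) := by
  by_cases hex : ∃ n, f n ≤ 0
  · obtain ⟨n₀, h0⟩ := hex
    have hL : (⨅ n, ((f n : ℝ) : EReal)) ≤ 0 := by
      refine (iInf_le _ n₀).trans ?_
      exact_mod_cast EReal.coe_le_coe_iff.2 h0
    rw [epos_eq_zero_of_nonpos hL]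
    symm
    rw [← le_zero_iff]
    refine (iInf_le _ n₀).trans ?_
    simp [ENNReal.ofReal_eq_zero.2 h0]
  · push_neg at hex
    have hbdd : BddBelow (range f) := ⟨0, by rintro y ⟨n, rfl⟩; exact (hex n).le⟩
    have h1 : (⨅ n, ((f n : ℝ) : EReal)) = ((⨅ n, f n : ℝ) : EReal) :=
      (Monotone.map_ciInf_of_continuousAt continuous_coe_real_ereal.continuousAt
        coe_mono_ereal hbdd).symm
    rw [h1, epos_coe]
    exact Monotone.map_ciInf_of_continuousAt ENNReal.continuous_ofReal.continuousAt
      (fun _ _ h => ENNReal.ofReal_le_ofReal h) hbdd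

lemma epos_iSup_coe (f : ℕ → ℝ) :
    epos (⨆ n, ((f n : ℝ) : EReal)) = ⨆ n, ENNReal.ofReal (f n) := by
  by_cases hbdd : BddAbove (range f)
  · have h1 : (⨆ n, ((f n : ℝ) : EReal)) = ((⨆ n, f n : ℝ) : EReal) :=
      (Monotone.map_ciSup_of_continuousAt continuous_coe_real_ereal.continuousAt
        coe_mono_ereal hbdd).symm
    rw [h1, epos_coe]
    exact Monotone.map_ciSup_of_continuousAt ENNReal.continuous_ofReal.continuousAt
      (fun _ _ h => ENNReal.ofReal_le_ofReal h) hbdd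
  · have hL : (⨆ n, ((f n : ℝ) : EReal)) = ⊤ := by
      by_contra hc
      apply hbdd
      refine ⟨(⨆ n, ((f n : ℝ) : EReal)).toReal, ?_⟩
      rintro y ⟨n, rfl⟩
      have hle : ((f n : ℝ) : EReal) ≤ ⨆ n, ((f n : ℝ) : EReal) :=
        le_iSup (fun n => ((f n : ℝ) : EReal)) n
      have hbot : (⨆ n, ((f n : ℝ) : EReal)) ≠ ⊥ :=
        fun hb => EReal.coe_ne_bot (f n) (le_bot_iff.1 (hb ▸ hle))
      exact EReal.coe_le_coe_iff.1 (hle.trans_eq (EReal.coe_toReal hc hbot).symm)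
    rw [hL, epos_top]
    symm
    by_contra hc
    have hC : (⨆ n, ENNReal.ofReal (f n)) ≠ ⊤ := hc
    have hub : ∀ n, f n ≤ (⨆ n, ENNReal.ofReal (f n)).toReal := by
      intro n
      rcases le_total (f n) 0 with h | h
      · exact h.trans ENNReal.toReal_nonneg
      · exact (ENNReal.ofReal_le_iff_le_toReal hC).1 (le_iSup (fun n => ENNReal.ofReal (f n)) n)
    have : (⨆ n, ((f n : ℝ) : EReal)) ≤ (((⨆ n, ENNReal.ofReal (f n)).toReal : ℝ) : EReal) :=
      iSup_le fun n => EReal.coe_le_coe_iff.2 (hub n)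
    rw [hL] at this
    exact EReal.coe_ne_top _ (top_le_iff.1 this)

section slope
variable {φ : ℝ → EReal} {dphi : ℝ → EReal}

lemma comb_le (hbot : ∀ u, φ u ≠ ⊥)
    (hconv : ∀ u v a b' : ℝ, 0 ≤ a → 0 ≤ b' → a + b' = 1 →
      φ (a * u + b' * v) ≤ (a : EReal) * φ u + (b' : EReal) * φ v)
    {u v : ℝ} (hu : φ u ≠ ⊤) (hv : φ v ≠ ⊤) {s : ℝ} (h0 : 0 ≤ s) (h1 : s ≤ 1) :
    φ (u + s * (v - u)) ≤ (((1 - s) * (φ u).toReal + s * (φ v).toReal : ℝ) : EReal) := by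
  have h := hconv u v (1 - s) s (by linarith) h0 (by ring)
  have harg : (1 - s) * u + s * v = u + s * (v - u) := by ring
  rw [harg] at h
  refine h.trans_eq ?_
  rw [← EReal.coe_toReal hu (hbot u), ← EReal.coe_toReal hv (hbot v),
    ← EReal.coe_mul, ← EReal.coe_mul, ← EReal.coe_add]
  norm_num

lemma comb_ne_top (hbot : ∀ u, φ u ≠ ⊥)
    (hconv : ∀ u v a b' : ℝ, 0 ≤ a → 0 ≤ b' → a + b' = 1 →
      φ (a * u + b' * v) ≤ (a : EReal) * φ u + (b' : EReal) * φ v)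
    {u v : ℝ} (hu : φ u ≠ ⊤) (hv : φ v ≠ ⊤) {s : ℝ} (h0 : 0 ≤ s) (h1 : s ≤ 1) :
    φ (u + s * (v - u)) ≠ ⊤ :=
  fun htop => EReal.coe_ne_top _
    (top_le_iff.1 ((htop ▸ comb_le hbot hconv hu hv h0 h1 : (⊤:EReal) ≤ _)))

lemma slope_mono (hbot : ∀ u, φ u ≠ ⊥)
    (hconv : ∀ u v a b' : ℝ, 0 ≤ a → 0 ≤ b' → a + b' = 1 →
      φ (a * u + b' * v) ≤ (a : EReal) * φ u + (b' : EReal) * φ v)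
    {u v : ℝ} (hu : φ u ≠ ⊤) (hv : φ v ≠ ⊤) {s s' : ℝ}
    (hs : 0 < s) (hss' : s ≤ s') (hs' : s' ≤ 1) :
    ((φ (u + s * (v - u))).toReal - (φ u).toReal) / s
      ≤ ((φ (u + s' * (v - u))).toReal - (φ u).toReal) / s' := by
  have hs'0 : 0 < s' := hs.trans_le hss'
  have hA' : φ (u + s' * (v - u)) ≠ ⊤ := comb_ne_top hbot hconv hu hv (by linarith) hs'
  have hA : φ (u + s * (v - u)) ≠ ⊤ := comb_ne_top hbot hconv hu hv hs.le (hss'.trans hs')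
  set τ := s / s' with hτ
  have hτ0 : 0 ≤ τ := div_nonneg hs.le hs'0.le
  have hτ1 : τ ≤ 1 := (div_le_one hs'0).2 hss'
  have hτs : τ * s' = s := div_mul_cancel₀ s hs'0.ne'
  have key := hconv u (u + s' * (v - u)) (1 - τ) τ (by linarith) hτ0 (by ring)
  have harg : (1 - τ) * u + τ * (u + s' * (v - u)) = u + s * (v - u) := by
    have : τ * s' * (v - u) = s * (v - u) := by rw [hτs]
    nlinarith [this]
  rw [harg] at key
  set pu := (φ u).toReal with hpu
  set a' := (φ (u + s' * (v - u))).toReal with ha'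
  set a := (φ (u + s * (v - u))).toReal with ha
  rw [← EReal.coe_toReal hu (hbot u), ← EReal.coe_toReal hA' (hbot _),
    ← EReal.coe_toReal hA (hbot _), ← hpu, ← ha', ← ha,
    ← EReal.coe_mul, ← EReal.coe_mul, ← EReal.coe_add] at key
  have hreal : a ≤ (1 - τ) * pu + τ * a' := EReal.coe_le_coe_iff.1 key
  rw [div_le_div_iff₀ hs hs'0]
  have h2 : a - pu ≤ τ * (a' - pu) := by nlinarith
  have h3 : (a - pu) * s' ≤ τ * (a' - pu) * s' :=
    mul_le_mul_of_nonneg_right h2 hs'0.le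
  calc (a - pu) * s' ≤ τ * (a' - pu) * s' := h3
    _ = (a' - pu) * (τ * s') := by ring
    _ = (a' - pu) * s := by rw [hτs]

lemma deriv_le_slope (hbot : ∀ u, φ u ≠ ⊥)
    (hconv : ∀ u v a b' : ℝ, 0 ≤ a → 0 ≤ b' → a + b' = 1 →
      φ (a * u + b' * v) ≤ (a : EReal) * φ u + (b' : EReal) * φ v)
    (hdphi : ∀ u v : ℝ, φ u ≠ ⊤ → φ v ≠ ⊤ →
      Tendsto (fun s : ℝ => ((((φ (u + s * (v - u))).toReal - (φ u).toReal) / s : ℝ) : EReal))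
        (𝓝[>] (0 : ℝ)) (𝓝 (dphi u * ((v : EReal) - (u : EReal)))))
    {u v : ℝ} (hu : φ u ≠ ⊤) (hv : φ v ≠ ⊤) {s : ℝ} (hs : 0 < s) (hs1 : s ≤ 1) :
    dphi u * ((v : EReal) - (u : EReal))
      ≤ ((((φ (u + s * (v - u))).toReal - (φ u).toReal) / s : ℝ) : EReal) := by
  refine le_of_tendsto (hdphi u v hu hv) ?_
  filter_upwards [Ioo_mem_nhdsGT_of_mem (show (0:ℝ) ∈ Ico (0:ℝ) s from ⟨le_refl 0, hs⟩)]
    with s' hs'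
  exact EReal.coe_le_coe_iff.2 (slope_mono hbot hconv hu hv hs'.1 hs'.2.le hs1)

lemma deriv_le_diff (hbot : ∀ u, φ u ≠ ⊥)
    (hconv : ∀ u v a b' : ℝ, 0 ≤ a → 0 ≤ b' → a + b' = 1 →
      φ (a * u + b' * v) ≤ (a : EReal) * φ u + (b' : EReal) * φ v)
    (hdphi : ∀ u v : ℝ, φ u ≠ ⊤ → φ v ≠ ⊤ →
      Tendsto (fun s : ℝ => ((((φ (u + s * (v - u))).toReal - (φ u).toReal) / s : ℝ) : EReal))
        (𝓝[>] (0 : ℝ)) (𝓝 (dphi u * ((v : EReal) - (u : EReal)))))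
    {u v : ℝ} (hu : φ u ≠ ⊤) (hv : φ v ≠ ⊤) :
    dphi u * ((v : EReal) - (u : EReal)) ≤ φ v - φ u := by
  have h := deriv_le_slope hbot hconv hdphi hu hv one_pos le_rfl
  rw [show u + 1 * (v - u) = v by ring] at h
  rwa [div_one, EReal.coe_sub, EReal.coe_toReal hv (hbot v), EReal.coe_toReal hu (hbot u)] at h

end slope

section extra
variable {T : Type*} [MeasurableSpace T] {μ : Measure T}

lemma ereal_neg_iInf (f : ℕ → EReal) : -(⨅ n, f n) = ⨆ n, -(f n) := by
  refine le_antisymm ?_ (iSup_le fun n => EReal.neg_le_neg_iff.2 (iInf_le _ n))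
  have h : -(⨆ n, -(f n)) ≤ ⨅ n, f n := by
    refine le_iInf fun n => ?_
    have := EReal.neg_le_neg_iff.2 (le_iSup (fun n => -(f n)) n)
    rwa [neg_neg] at this
  have := EReal.neg_le_neg_iff.2 h
  rwa [neg_neg] at this

lemma le_add_cancel {r : ℝ} {e : EReal} (h : (r : EReal) ≤ (r : EReal) + e) : 0 ≤ e := by
  induction e using EReal.rec with
  | bot =>
    rw [EReal.add_bot] at h
    exact absurd (le_bot_iff.1 h) (EReal.coe_ne_bot r)
  | top => exact le_top
  | coe y =>
    rw [← EReal.coe_add, EReal.coe_le_coe_iff] at h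
    exact_mod_cast (by linarith : (0:ℝ) ≤ y)

lemma eintegral_zero_le : (0 : EReal) ≤ eintegral μ (fun _ => (0 : EReal)) := by
  rw [eintegral_nonneg_iff]
  simp


end extra

section qlem

noncomputable def sn (n : ℕ) : ℝ := 1 / ((n : ℝ) + 1)

lemma sn_pos (n : ℕ) : 0 < sn n := by unfold sn; positivity

lemma sn_le_one (n : ℕ) : sn n ≤ 1 := by
  unfold sn
  rw [div_le_one (by positivity)]
  linarith [Nat.cast_nonneg (α := ℝ) n]

lemma sn_succ_le (n : ℕ) : sn (n + 1) ≤ sn n := by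
  unfold sn
  apply one_div_le_one_div_of_le (by positivity)
  push_cast
  linarith

lemma sn_tendsto : Tendsto sn atTop (𝓝[>] (0:ℝ)) := by
  rw [tendsto_nhdsWithin_iff]
  constructor
  · exact tendsto_one_div_add_atTop_nhds_zero_nat
  · exact Filter.Eventually.of_forall fun n => Set.mem_Ioi.2 (sn_pos n)

lemma iInf_slope_eq {φ dphi : ℝ → EReal} (hbot : ∀ u, φ u ≠ ⊥)
    (hconv : ∀ u v a b' : ℝ, 0 ≤ a → 0 ≤ b' → a + b' = 1 →
      φ (a * u + b' * v) ≤ (a : EReal) * φ u + (b' : EReal) * φ v)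
    (hdphi : ∀ u v : ℝ, φ u ≠ ⊤ → φ v ≠ ⊤ →
      Tendsto (fun s : ℝ => ((((φ (u + s * (v - u))).toReal - (φ u).toReal) / s : ℝ) : EReal))
        (𝓝[>] (0 : ℝ)) (𝓝 (dphi u * ((v : EReal) - (u : EReal)))))
    {u v : ℝ} (hu : φ u ≠ ⊤) (hv : φ v ≠ ⊤) :
    (⨅ n : ℕ, ((((φ (u + sn n * (v - u))).toReal - (φ u).toReal) / sn n : ℝ) : EReal))
      = dphi u * ((v : EReal) - (u : EReal)) := by
  have hanti : Antitone fun n : ℕ =>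
      ((((φ (u + sn n * (v - u))).toReal - (φ u).toReal) / sn n : ℝ) : EReal) :=
    antitone_nat_of_succ_le fun n => EReal.coe_le_coe_iff.2
      (slope_mono hbot hconv hu hv (sn_pos (n+1)) (sn_succ_le n) (sn_le_one n))
  have h1 := tendsto_atTop_iInf hanti
  have h2 : Tendsto (fun n : ℕ =>
      ((((φ (u + sn n * (v - u))).toReal - (φ u).toReal) / sn n : ℝ) : EReal)) atTop
      (𝓝 (dphi u * ((v : EReal) - (u : EReal)))) :=
    (hdphi u v hu hv).comp sn_tendsto
  exact tendsto_nhds_unique h1 h2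

end qlem

/-- Characterization of optimality via the integral condition: a feasible `x̄` with `Φ(x̄) ∈ ℝ`
is optimal for (P) iff `∫ φ'(x̄)·u dμ ≥ 0` for every `u ∈ K_x̄ = [ℝ₊(dom Φ - x̄)] ∩ X̃⁰`. -/
theorem stmt_14 {T : Type*} [MeasurableSpace T] (μ : Measure T) (φ : ℝ → EReal)
(hbot : ∀ u, φ u ≠ ⊥) (hproper : ∃ u, φ u ≠ ⊤) (hlsc : LowerSemicontinuous φ)
    (hconv : ∀ u v a b' : ℝ, 0 ≤ a → 0 ≤ b' → a + b' = 1 →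
      φ (a * u + b' * v) ≤ (a : EReal) * φ u + (b' : EReal) * φ v)
    (hstrict : ∀ u v : ℝ, φ u ≠ ⊤ → φ v ≠ ⊤ → u ≠ v → ∀ a b' : ℝ, 0 < a → 0 < b' → a + b' = 1 →
      φ (a * u + b' * v) < (a : EReal) * φ u + (b' : EReal) * φ v)
    (hint : (interior {u : ℝ | φ u ≠ ⊤}).Nonempty)
(dphi : ℝ → EReal)
    (hdphi : ∀ u v : ℝ, φ u ≠ ⊤ → φ v ≠ ⊤ →
      Tendsto (fun s : ℝ => ((((φ (u + s * (v - u))).toReal - (φ u).toReal) / s : ℝ) : EReal))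
        (𝓝[>] (0 : ℝ)) (𝓝 (dphi u * ((v : EReal) - (u : EReal)))))
    (m : ℕ) (ψ : Fin m → T → ℝ) (hψ : ∀ k, Measurable (ψ k)) (b : Fin m → ℝ)
    (X : Subspace ℝ (T → ℝ)) (hX : ∀ x ∈ X, Measurable x)
    (xb : T → ℝ) (hxbX : xb ∈ X) (hxbF : xb ∈ Feas μ ψ b)
    (hfin : ∃ r : ℝ, Phi μ φ xb = (r : EReal)) :
    (∀ x ∈ X, x ∈ Feas μ ψ b → Phi μ φ xb ≤ Phi μ φ x) ↔
      (∀ u : T → ℝ,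
        (∃ c : ℝ, ∃ x : T → ℝ, 0 ≤ c ∧ x ∈ X ∧ Phi μ φ x < ⊤ ∧ u = c • (x - xb)) →
        u ∈ Feas μ ψ (fun _ => (0 : ℝ)) →
        0 ≤ eintegral μ (fun t => dphi (xb t) * ((u t : ℝ) : EReal))) := by
  classical
  obtain ⟨r, hr⟩ := hfin
  have hφm : Measurable φ := hlsc.measurable
  have hxbm : Measurable xb := hxbF.1
  have hr' : eintegral μ (fun t => φ (xb t)) = (r : EReal) := hr
  have hPb : ∫⁻ t, epos (φ (xb t)) ∂μ ≠ ⊤ := by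
    intro h
    rw [eintegral, if_pos h] at hr'
    exact EReal.coe_ne_top r hr'.symm
  have hNb : ∫⁻ t, epos (-φ (xb t)) ∂μ ≠ ⊤ := by
    intro h
    rw [eintegral, if_neg hPb, h, EReal.coe_ennreal_top, ereal_sub_top] at hr'
    exact EReal.coe_ne_bot r hr'.symm
  have hmb : Measurable fun t => epos (φ (xb t)) := measurable_epos.comp (hφm.comp hxbm)
  have haeb : ∀ᵐ t ∂μ, φ (xb t) ≠ ⊤ := by
    filter_upwards [ae_lt_top hmb hPb] with t ht
    exact fun h => absurd (epos_eq_top_iff.2 h) ht.ne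
  have hbm : Measurable (fun t => (φ (xb t)).toReal) := (hφm.comp hxbm).ereal_toReal
  have hbeq : (fun t => φ (xb t)) =ᵐ[μ] (fun t => (((φ (xb t)).toReal : ℝ) : EReal)) :=
    haeb.mono fun t ht => (EReal.coe_toReal ht (hbot _)).symm
  have hPb' : ∫⁻ t, epos ((((φ (xb t)).toReal : ℝ) : EReal)) ∂μ ≠ ⊤ := by
    rw [← lintegral_congr_ae ((hbeq.mono fun t ht => congrArg epos ht) :
      (fun t => epos (φ (xb t))) =ᵐ[μ] _)]
    exact hPb
  have hNb' : ∫⁻ t, epos (-(((φ (xb t)).toReal : ℝ) : EReal)) ∂μ ≠ ⊤ := by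
    rw [← lintegral_congr_ae ((hbeq.mono fun t ht => congrArg (fun z => epos (-z)) ht) :
      (fun t => epos (-φ (xb t))) =ᵐ[μ] _)]
    exact hNb
  have hReq : eintegral μ (fun t => (((φ (xb t)).toReal : ℝ) : EReal)) = (r : EReal) :=
    (eintegral_congr_ae hbeq).symm.trans hr'
  constructor
  · -- optimality implies the integral condition
    intro hopt u hEx huF
    obtain ⟨c, x, hc0, hxX, hPxlt, huce⟩ := hEx
    have hut : ∀ t, u t = c * (x t - xb t) := fun t => by
      rw [huce]; rfl
    rcases hc0.eq_or_lt with hc | hc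
    · -- c = 0
      have hu0 : ∀ t, u t = 0 := fun t => by rw [hut t, ← hc, zero_mul]
      have h00 : (fun t => dphi (xb t) * ((u t : ℝ) : EReal)) = fun _ => (0 : EReal) := by
        funext t
        rw [hu0 t]
        simp
      rw [h00]
      exact eintegral_zero_le
    · -- 0 < c
      have hxm : Measurable x := hX x hxX
      have hPx : ∫⁻ t, epos (φ (x t)) ∂μ ≠ ⊤ := by
        intro h
        rw [show Phi μ φ x = eintegral μ (fun t => φ (x t)) from rfl, eintegral, if_pos h]
          at hPxlt
        exact lt_irrefl _ hPxlt
      have hmx : Measurable fun t => epos (φ (x t)) := measurable_epos.comp (hφm.comp hxm)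
      have haex : ∀ᵐ t ∂μ, φ (x t) ≠ ⊤ := by
        filter_upwards [ae_lt_top hmx hPx] with t ht
        exact fun h => absurd (epos_eq_top_iff.2 h) ht.ne
      have htrans : (fun t => dphi (xb t) * ((u t : ℝ) : EReal))
          = fun t => (c : EReal) * (dphi (xb t) * (((x t - xb t : ℝ)) : EReal)) := by
        funext t
        rw [hut t, EReal.coe_mul, mul_left_comm]
      rw [htrans, eintegral_coe_mul_nonneg_iff hc
        (fun t => dphi (xb t) * (((x t - xb t : ℝ)) : EReal))]
      set q : ℕ → T → ℝ := fun n t =>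
        ((φ (xb t + sn n * (x t - xb t))).toReal - (φ (xb t)).toReal) / sn n with hqdef
      have qm : ∀ n, Measurable (q n) := fun n =>
        ((hφm.comp (hxbm.add ((hxm.sub hxbm).const_mul (sn n)))).ereal_toReal.sub
          (hφm.comp hxbm).ereal_toReal).div_const (sn n)
      set G : T → EReal := fun t => ⨅ n, ((q n t : ℝ) : EReal) with hGdef
      have hGm : Measurable G :=
        Measurable.iInf fun n => measurable_coe_real_ereal.comp (qm n)
      have hGg : ∀ᵐ t ∂μ, G t = dphi (xb t) * (((x t : ℝ) : EReal) - ((xb t : ℝ) : EReal)) := by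
        filter_upwards [haeb, haex] with t hbt hxt
        exact iInf_slope_eq hbot hconv hdphi hbt hxt
      have hgG : (fun t => dphi (xb t) * (((x t - xb t : ℝ)) : EReal)) =ᵐ[μ] G := by
        filter_upwards [hGg] with t ht
        rw [ht, EReal.coe_sub]
      rw [eintegral_congr_ae hgG, eintegral_nonneg_iff]
      have haeanti : ∀ᵐ t ∂μ, ∀ n, q (n+1) t ≤ q n t := by
        filter_upwards [haeb, haex] with t hbt hxt n
        exact slope_mono hbot hconv hbt hxt (sn_pos (n+1)) (sn_succ_le n) (sn_le_one n)
      have hJn : ∀ n, ∫⁻ t, epos (-((q n t : ℝ) : EReal)) ∂μ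
          ≤ ∫⁻ t, epos (((q n t : ℝ) : EReal)) ∂μ := by
        intro n
        have hQm : Measurable fun t => ((sn n * q n t : ℝ) : EReal) :=
          measurable_coe_real_ereal.comp ((qm n).const_mul (sn n))
        have hadd := eintegral_add_left_real (μ := μ) hbm hQm hPb' hNb'
        have hxnX : (fun t => xb t + sn n * (x t - xb t)) ∈ X := by
          have hfe : (fun t => xb t + sn n * (x t - xb t)) = xb + sn n • (x - xb) := by
            funext t
            simp [Pi.smul_apply, Pi.sub_apply, Pi.add_apply, smul_eq_mul]
          rw [hfe]
          exact X.add_mem hxbX (X.smul_mem _ (X.sub_mem hxX hxbX))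
        have heqk : ∀ k, ∀ t : T, (xb t + sn n * (x t - xb t)) * ψ k t
            = xb t * ψ k t + (sn n / c) * (u t * ψ k t) := by
          intro k t
          rw [hut t]
          field_simp
        have hxnF : (fun t => xb t + sn n * (x t - xb t)) ∈ Feas μ ψ b := by
          refine ⟨hX _ hxnX, fun k => ?_, fun k => ?_⟩
          · exact ((hxbF.2.1 k).add ((huF.2.1 k).const_mul (sn n / c))).congr
              (ae_of_all _ fun t => (heqk k t).symm)
          · rw [integral_congr_ae (ae_of_all _ (heqk k)),
              integral_add (hxbF.2.1 k) ((huF.2.1 k).const_mul _), integral_const_mul _ _,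
              hxbF.2.2 k, huF.2.2 k, mul_zero, add_zero]
        have hopt_n := hopt _ hxnX hxnF
        rw [hr] at hopt_n
        have hphieq : (fun t => φ (xb t + sn n * (x t - xb t))) =ᵐ[μ]
            (fun t => (((φ (xb t)).toReal : ℝ) : EReal) + ((sn n * q n t : ℝ) : EReal)) := by
          filter_upwards [haeb, haex] with t hbt hxt
          have hne : φ (xb t + sn n * (x t - xb t)) ≠ ⊤ :=
            comb_ne_top hbot hconv hbt hxt (sn_pos n).le (sn_le_one n)
          rw [← EReal.coe_add,
            show (φ (xb t)).toReal + sn n * q n t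
              = (φ (xb t + sn n * (x t - xb t))).toReal by
                simp only [hqdef]
                field_simp [(sn_pos n).ne']
                ring]
          exact (EReal.coe_toReal hne (hbot _)).symm
        have hPhix_n : Phi μ φ (fun t => xb t + sn n * (x t - xb t))
            = (r : EReal) + eintegral μ (fun t => ((sn n * q n t : ℝ) : EReal)) := by
          rw [show Phi μ φ (fun t => xb t + sn n * (x t - xb t))
              = eintegral μ (fun t => φ (xb t + sn n * (x t - xb t))) from rfl,
            eintegral_congr_ae hphieq, hadd, hReq]
        rw [hPhix_n] at hopt_n
        have h0 : (0 : EReal) ≤ eintegral μ (fun t => ((sn n * q n t : ℝ) : EReal)) :=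
          le_add_cancel hopt_n
        have hcoe : (fun t => ((sn n * q n t : ℝ) : EReal))
            = fun t => ((sn n : ℝ) : EReal) * ((q n t : ℝ) : EReal) :=
          funext fun t => EReal.coe_mul _ _
        rw [hcoe] at h0
        exact eintegral_nonneg_iff.1
          ((eintegral_coe_mul_nonneg_iff (sn_pos n) (fun t => ((q n t : ℝ) : EReal))).1 h0)
      have hmono_ineq : ∀ m' k : ℕ, m' ≤ k → ∀ᵐ t ∂μ, q k t ≤ q m' t := by
        intro m' k hmk
        filter_upwards [haeanti] with t ht
        have hat : Antitone fun k => q k t := antitone_nat_of_succ_le fun n' => ht n'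
        exact hat hmk
      have hAanti : ∀ m' k : ℕ, m' ≤ k →
          ∫⁻ t, epos ((q k t : ℝ) : EReal) ∂μ ≤ ∫⁻ t, epos ((q m' t : ℝ) : EReal) ∂μ := by
        intro m' k hmk
        refine lintegral_mono_ae ?_
        filter_upwards [hmono_ineq m' k hmk] with t ht
        exact epos_mono (EReal.coe_le_coe_iff.2 ht)
      have hBmono : ∀ m' k : ℕ, m' ≤ k →
          ∫⁻ t, epos (-((q m' t : ℝ) : EReal)) ∂μ
            ≤ ∫⁻ t, epos (-((q k t : ℝ) : EReal)) ∂μ := by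
        intro m' k hmk
        refine lintegral_mono_ae ?_
        filter_upwards [hmono_ineq m' k hmk] with t ht
        exact epos_mono (EReal.neg_le_neg_iff.2 (EReal.coe_le_coe_iff.2 ht))
      have hA0 : ∫⁻ t, epos ((q 0 t : ℝ) : EReal) ∂μ ≠ ⊤ := by
        have hsn0 : sn 0 = 1 := by norm_num [sn]
        have hbound : ∀ᵐ t ∂μ, epos ((q 0 t : ℝ) : EReal)
            ≤ epos (φ (x t)) + epos (-φ (xb t)) := by
          filter_upwards [haeb, haex] with t hbt hxt
          have hq0 : q 0 t = (φ (x t)).toReal + (-(φ (xb t)).toReal) := by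
            simp only [hqdef, hsn0, one_mul, div_one]
            rw [show xb t + (x t - xb t) = x t by ring]
            ring
          rw [hq0, epos_coe]
          refine ENNReal.ofReal_add_le.trans ?_
          have e1 : ENNReal.ofReal (φ (x t)).toReal = epos (φ (x t)) :=
            (epos_coe_eq hxt).symm
          have hnbt : -φ (xb t) ≠ ⊤ := by
            intro hcontra
            apply hbot (xb t)
            have := congrArg Neg.neg hcontra
            rwa [neg_neg, EReal.neg_top] at this
          have e2 : ENNReal.ofReal (-(φ (xb t)).toReal) = epos (-φ (xb t)) := by
            rw [← EReal.toReal_neg_eq, (epos_coe_eq hnbt).symm]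
          rw [e1, e2]
        have hle := lintegral_mono_ae hbound
        rw [lintegral_add_left hmx] at hle
        exact ne_top_of_le_ne_top (ENNReal.add_ne_top.2 ⟨hPx, hNb⟩) hle
      have hepos_inf : ∀ t, epos (G t) = ⨅ n, epos ((q n t : ℝ) : EReal) := by
        intro t
        rw [hGdef]
        rw [epos_iInf_coe (fun n => q n t)]
        exact iInf_congr fun n => (epos_coe (q n t)).symm
      have hneg_inf : ∀ t, epos (-G t) = ⨆ n, epos (-((q n t : ℝ) : EReal)) := by
        intro t
        rw [hGdef]
        show epos (-(⨅ n, ((q n t : ℝ) : EReal))) = _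
        rw [ereal_neg_iInf, show (fun n => -((q n t : ℝ) : EReal))
            = fun n => (((-q n t : ℝ)) : EReal) from funext fun n => (EReal.coe_neg _).symm,
          epos_iSup_coe (fun n => -q n t)]
        refine iSup_congr fun n => ?_
        rw [← epos_coe, EReal.coe_neg]
      have hAlim : ∫⁻ t, epos (G t) ∂μ = ⨅ n, ∫⁻ t, epos ((q n t : ℝ) : EReal) ∂μ := by
        rw [lintegral_congr hepos_inf]
        exact lintegral_iInf_ae
          (fun n => measurable_epos.comp (measurable_coe_real_ereal.comp (qm n)))
          (fun n => haeanti.mono fun t ht => epos_mono (EReal.coe_le_coe_iff.2 (ht n))) hA0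
      have hBlim : ∫⁻ t, epos (-G t) ∂μ
          = ⨆ n, ∫⁻ t, epos (-((q n t : ℝ) : EReal)) ∂μ := by
        rw [lintegral_congr hneg_inf]
        exact lintegral_iSup'
          (fun n => (measurable_epos.comp
            ((continuous_neg.measurable).comp (measurable_coe_real_ereal.comp (qm n)))).aemeasurable)
          (haeanti.mono fun t ht => monotone_nat_of_le_succ fun n =>
            epos_mono (EReal.neg_le_neg_iff.2 (EReal.coe_le_coe_iff.2 (ht n))))
      rw [hAlim, hBlim]
      refine iSup_le fun n => le_iInf fun m' => ?_
      calc ∫⁻ t, epos (-((q n t : ℝ) : EReal)) ∂μ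
          ≤ ∫⁻ t, epos (-((q (max n m') t : ℝ) : EReal)) ∂μ := hBmono n _ (le_max_left _ _)
        _ ≤ ∫⁻ t, epos ((q (max n m') t : ℝ) : EReal) ∂μ := hJn _
        _ ≤ ∫⁻ t, epos ((q m' t : ℝ) : EReal) ∂μ := hAanti m' _ (le_max_right _ _)
  · -- integral condition implies optimality
    intro hcond x hxX hxF
    rcases eq_or_ne (Phi μ φ x) ⊤ with htop | htop
    · rw [htop, hr]; exact le_top
    have hxm : Measurable x := hxF.1
    have hPx : ∫⁻ t, epos (φ (x t)) ∂μ ≠ ⊤ := by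
      intro h
      exact htop (by
        rw [show Phi μ φ x = eintegral μ (fun t => φ (x t)) from rfl, eintegral, if_pos h])
    have hmx : Measurable fun t => epos (φ (x t)) := measurable_epos.comp (hφm.comp hxm)
    have haex : ∀ᵐ t ∂μ, φ (x t) ≠ ⊤ := by
      filter_upwards [ae_lt_top hmx hPx] with t ht
      exact fun h => absurd (epos_eq_top_iff.2 h) ht.ne
    have hsub : ∀ t : T, (x - xb) t = x t - xb t := fun t => rfl
    have huF : (x - xb) ∈ Feas μ ψ (fun _ => (0 : ℝ)) := by
      refine ⟨(hxm.sub hxbm : Measurable fun t => x t - xb t), fun k => ?_, fun k => ?_⟩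
      · refine ((hxF.2.1 k).sub (hxbF.2.1 k)).congr (ae_of_all _ fun t => ?_)
        simp [Pi.sub_apply, sub_mul]
      · have hfe : (fun t => (x - xb) t * ψ k t)
            = fun t => x t * ψ k t - xb t * ψ k t := by
          funext t
          rw [hsub t, sub_mul]
        rw [hfe, integral_sub (hxF.2.1 k) (hxbF.2.1 k), hxF.2.2 k, hxbF.2.2 k, sub_self]
    have hI := hcond (x - xb)
      ⟨1, x, zero_le_one, hxX, lt_top_iff_ne_top.2 htop, (one_smul ℝ (x - xb)).symm⟩ huF
    set q : ℕ → T → ℝ := fun n t =>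
      ((φ (xb t + sn n * (x t - xb t))).toReal - (φ (xb t)).toReal) / sn n with hqdef
    have qm : ∀ n, Measurable (q n) := fun n =>
      ((hφm.comp (hxbm.add ((hxm.sub hxbm).const_mul (sn n)))).ereal_toReal.sub
        (hφm.comp hxbm).ereal_toReal).div_const (sn n)
    set G : T → EReal := fun t => ⨅ n, ((q n t : ℝ) : EReal) with hGdef
    have hGm : Measurable G :=
      Measurable.iInf fun n => measurable_coe_real_ereal.comp (qm n)
    have hGg : ∀ᵐ t ∂μ, G t = dphi (xb t) * (((x t : ℝ) : EReal) - ((xb t : ℝ) : EReal)) := by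
      filter_upwards [haeb, haex] with t hbt hxt
      exact iInf_slope_eq hbot hconv hdphi hbt hxt
    have hgG : (fun t => dphi (xb t) * (((x - xb) t : ℝ) : EReal)) =ᵐ[μ] G := by
      filter_upwards [hGg] with t ht
      rw [hsub t, ht, EReal.coe_sub]
    have hI' : (0 : EReal) ≤ eintegral μ G := by
      rw [← eintegral_congr_ae hgG]
      exact hI
    have hadd := eintegral_add_left_real (μ := μ) hbm hGm hPb' hNb'
    have hle2 : eintegral μ (fun t => (((φ (xb t)).toReal : ℝ) : EReal) + G t)
        ≤ eintegral μ (fun t => φ (x t)) := by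
      refine eintegral_mono_ae ?_
      filter_upwards [haeb, haex, hGg] with t hbt hxt hGt
      rw [hGt]
      have hd := deriv_le_diff hbot hconv hdphi hbt hxt
      have hxreal : φ (x t) = (((φ (x t)).toReal : ℝ) : EReal) :=
        (EReal.coe_toReal hxt (hbot _)).symm
      have hbreal : φ (xb t) = (((φ (xb t)).toReal : ℝ) : EReal) :=
        (EReal.coe_toReal hbt (hbot _)).symm
      calc (((φ (xb t)).toReal : ℝ) : EReal)
            + dphi (xb t) * (((x t : ℝ) : EReal) - ((xb t : ℝ) : EReal))
          ≤ (((φ (xb t)).toReal : ℝ) : EReal) + (φ (x t) - φ (xb t)) := add_le_add_right hd _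
        _ = φ (x t) := by
            rw [hxreal, hbreal, ← EReal.coe_sub, ← EReal.coe_add]
            norm_num
    calc Phi μ φ xb = (r : EReal) := hr
      _ = (r : EReal) + 0 := (add_zero _).symm
      _ ≤ (r : EReal) + eintegral μ G := add_le_add_right hI' _
      _ = eintegral μ (fun t => (((φ (xb t)).toReal : ℝ) : EReal) + G t) := by
          rw [hadd, hReq]
      _ ≤ eintegral μ (fun t => φ (x t)) := hle2
      _ = Phi μ φ x := rfl
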